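/- Let N be an odd prime and let P be a Laurent polynomial in Z[q, q^{-1}] that is invariant under the substitution q ↦ -q. If P vanishes at a primitive 2N-th root of unity ω, then P is divisible in Z[q, q^{-1}] by U_N = q^{-N+1} + q^{-N+3} + ... + q^{N-1}, and the quotient is again invariant under q ↦ -q. -/

import Mathlib

open LaurentPolynomial

/-- The quantum integer `U_N = q^{-N+1} + q^{-N+3} + ⋯ + q^{N-1}`. -/
noncomputable def qint (N : ℕ) : LaurentPolynomial ℤ :=
  ∑ k ∈ Finset.range N, T (2 * (k : ℤ) - N + 1)

/-- Evaluation of an integer Laurent polynomial at a nonzero complex number. -/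
noncomputable def leval (z : ℂ) (P : LaurentPolynomial ℤ) : ℂ :=
  P.coeff.sum fun n a => (a : ℂ) * z ^ n

/-- A Laurent polynomial is *even* (invariant under `q ↦ -q`) iff all its
odd-degree coefficients vanish. -/
def IsEvenLP (P : LaurentPolynomial ℤ) : Prop := ∀ n : ℤ, Odd n → P.coeff n = 0

/-- The doubling ring hom `q ↦ q²`. -/
noncomputable def dbl : LaurentPolynomial ℤ →+* LaurentPolynomial ℤ :=
  AddMonoidAlgebra.mapDomainRingHom ℤ (AddMonoidHom.mulLeft (2 : ℤ))

lemma dbl_apply (W : LaurentPolynomial ℤ) :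
    dbl W = AddMonoidAlgebra.mapDomain (fun n => 2 * n) W := rfl

lemma dbl_T (m : ℤ) : dbl (T m) = T (2 * m) := by
  rw [dbl_apply]; exact AddMonoidAlgebra.mapDomain_single

lemma isEvenLP_dbl (W : LaurentPolynomial ℤ) : IsEvenLP (dbl W) := by
  intro n hn
  rw [dbl_apply]
  apply Finsupp.mapDomain_notin_range
  rintro ⟨m, rfl⟩
  exact (Int.not_odd_iff_even.mpr ⟨m, two_mul m⟩) hn

lemma leval_single (z : ℂ) (n : ℤ) (a : ℤ) :
    leval z (AddMonoidAlgebra.single n a) = (a : ℂ) * z ^ n := by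
  rw [_root_.leval, AddMonoidAlgebra.coeff_single, Finsupp.sum_single_index (by simp)]

lemma leval_T (z : ℂ) (n : ℤ) : leval z (T n) = z ^ n := by
  simpa using leval_single z n 1

lemma leval_add (z : ℂ) (A B : LaurentPolynomial ℤ) :
    leval z (A + B) = leval z A + leval z B := by
  rw [_root_.leval, AddMonoidAlgebra.coeff_add, Finsupp.sum_add_index (by simp) (by intros; push_cast; ring)]; rfl

noncomputable def levalRH (z : ℂ) (hz : z ≠ 0) : LaurentPolynomial ℤ →+* ℂ :=
  ((AddMonoidAlgebra.lift ℤ ℂ ℤ)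
    ((Units.coeHom ℂ).comp (zpowersHom ℂˣ (Units.mk0 z hz)))).toRingHom

lemma leval_eq_levalRH (z : ℂ) (hz : z ≠ 0) (P : LaurentPolynomial ℤ) :
    leval z P = levalRH z hz P := by
  rw [levalRH, AlgHom.toRingHom_eq_coe, RingHom.coe_coe, AddMonoidAlgebra.lift_apply]
  rw [_root_.leval]
  refine Finsupp.sum_congr fun n _ => ?_
  simp [zsmul_eq_mul]

lemma leval_mul (z : ℂ) (hz : z ≠ 0) (A B : LaurentPolynomial ℤ) :
    leval z (A * B) = leval z A * leval z B := by
  simp only [leval_eq_levalRH z hz, map_mul]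

lemma leval_dbl (z : ℂ) (hz : z ≠ 0) (W : LaurentPolynomial ℤ) :
    leval z (dbl W) = leval (z ^ 2) W := by
  rw [dbl_apply, _root_.leval, AddMonoidAlgebra.coeff_mapDomain, Finsupp.sum_mapDomain_index (by simp) (by intros; push_cast; ring)]
  refine Finsupp.sum_congr fun n _ => ?_
  congr 1
  have h : ∀ k : ℤ, z ^ k = ((Units.mk0 z hz ^ k : ℂˣ) : ℂ) :=
    fun k => by rw [Units.val_zpow_eq_zpow_val, Units.val_mk0]
  rw [h, show ((Units.mk0 z hz) ^ (2 * n)) = ((Units.mk0 z hz) ^ (2:ℕ)) ^ n by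
    rw [← zpow_natCast _ 2, ← zpow_mul]; norm_num, Units.val_zpow_eq_zpow_val,
    Units.val_pow_eq_pow_val, Units.val_mk0]

lemma leval_toLaurent (z : ℂ) (p : Polynomial ℤ) :
    leval z (p.toLaurent) = Polynomial.aeval z p := by
  induction p using Polynomial.induction_on' with
  | add p q hp hq => rw [map_add, map_add, leval_add, hp, hq]
  | monomial n a =>
      have h1 : (Polynomial.monomial n a).toLaurent = AddMonoidAlgebra.single (n : ℤ) a := by
        rw [Polynomial.toLaurent_C_mul_T, ← single_eq_C_mul_T]
      rw [h1, leval_single]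
      simp [zpow_natCast]

/-- Let `N` be an odd prime and `P ∈ ℤ[q,q⁻¹]` even.  If `P` vanishes at a
primitive `2N`-th root of unity `ω`, then `P` is divisible by `U_N` with an
even quotient. -/
theorem stmt_4 (N : ℕ) (hN : N.Prime) (hodd : Odd N) (ω : ℂ)
    (hω : IsPrimitiveRoot ω (2 * N)) (P : LaurentPolynomial ℤ)
    (hP : IsEvenLP P) (hPω : leval ω P = 0) :
    ∃ Q : LaurentPolynomial ℤ, P = qint N * Q ∧ IsEvenLP Q := by
  haveI : Fact N.Prime := ⟨hN⟩
  have hNpos : 0 < N := hN.pos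
  have hω0 : ω ≠ 0 := hω.ne_zero (by positivity)
  have hω2 : IsPrimitiveRoot (ω ^ 2) N := hω.pow (by positivity) rfl
  have hω20 : (ω ^ 2) ≠ 0 := pow_ne_zero _ hω0
  have hinj : Function.Injective (fun n : ℤ => 2 * n) :=
    fun a b h => by dsimp at h; omega
  set R : LaurentPolynomial ℤ :=
    AddMonoidAlgebra.comapDomain (fun n : ℤ => 2 * n) hinj P with hR
  have hPR : P = dbl R := by
    rw [dbl_apply, hR, AddMonoidAlgebra.mapDomain_comapDomain (hf := hinj)]
    intro n hn
    rcases Int.even_or_odd n with ⟨m, hm⟩ | ho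
    · exact ⟨m, by dsimp; omega⟩
    · exact absurd (hP n ho) (Finsupp.mem_support_iff.mp hn)
  obtain ⟨n, r, hr⟩ := R.exists_T_pow
  have hRr : R = r.toLaurent * T (-(n : ℤ)) := by
    rw [hr, mul_T_assoc, add_neg_cancel, T_zero, mul_one]
  have hrω : Polynomial.aeval (ω ^ 2) r = 0 := by
    have h1 : leval (ω ^ 2) R = 0 := by
      rw [← leval_dbl ω hω0, ← hPR, hPω]
    rw [hRr, leval_mul _ hω20, leval_T, leval_toLaurent] at h1
    have hne : (ω ^ 2) ^ (-(n : ℤ)) ≠ 0 := zpow_ne_zero _ hω20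
    exact (mul_eq_zero.mp h1).resolve_right hne
  have hdvd : Polynomial.cyclotomic N ℤ ∣ r := by
    have h2 : Polynomial.cyclotomic N ℚ ∣ r.map (Int.castRingHom ℚ) := by
      rw [Polynomial.cyclotomic_eq_minpoly_rat hω2 hNpos]
      apply minpoly.dvd
      rw [show (Int.castRingHom ℚ) = algebraMap ℤ ℚ from rfl,
        Polynomial.aeval_map_algebraMap]
      exact hrω
    rwa [← Polynomial.map_cyclotomic_int N ℚ,
      Polynomial.map_dvd_map _ (Int.castRingHom ℚ).injective_int
        (Polynomial.cyclotomic.monic N ℤ)] at h2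
  obtain ⟨s, hs⟩ := hdvd
  have hgeo : dbl ((Polynomial.cyclotomic N ℤ).toLaurent) = qint N * T ((N : ℤ) - 1) := by
    rw [Polynomial.cyclotomic_prime ℤ N, map_sum, map_sum, qint, Finset.sum_mul]
    refine Finset.sum_congr rfl fun k _ => ?_
    rw [Polynomial.toLaurent_X_pow, dbl_T, ← T_add]
    ring_nf
  obtain ⟨m, hm⟩ : ∃ m : ℤ, (N : ℤ) - 1 = 2 * m := by
    obtain ⟨j, hj⟩ := hodd; exact ⟨j, by omega⟩
  refine ⟨dbl (T (m - n) * s.toLaurent), ?_, isEvenLP_dbl _⟩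
  rw [hPR, hRr, hs, map_mul, map_mul, map_mul, map_mul, hgeo, dbl_T, dbl_T]
  rw [show (2 : ℤ) * (m - n) = ((N:ℤ) - 1) + 2 * (-n) by omega, T_add]
  ring
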